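/- arXiv:2410.01352 — 2 statements merged into one kernel-verified Lean document; each statement's English description precedes it below -/
import Mathlib

section
/- Let $A_{11}:[0,T]\to\mathbb M_d$ solve the matrix Riccati ODE $\dot A_{11}(t) = -\gamma A_{11}(t)\Sigma\Sigma^\top A_{11}(t) + 2K A_{11}(t)$ with terminal condition $A_{11}(T) = A^F_{11}$ negative semidefinite, where $\gamma, K > 0$. Then the solution exists uniquely on all of $[0,T]$ and $A_{11}(t)$ is negative semidefinite for every $t\in[0,T]$; consequently, for any positive definite covariance matrix $V$, the matrix $V^{-1} - \gamma A_{11}(0)$ is positive definite. -/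
open Matrix

attribute [local instance] Matrix.normedAddCommGroup Matrix.normedSpace

private lemma matrix_norm_mul_le {d : ℕ} (X Y : Matrix (Fin d) (Fin d) ℝ) :
    ‖X * Y‖ ≤ d * ‖X‖ * ‖Y‖ := by
  have hnn : (0:ℝ) ≤ d * ‖X‖ * ‖Y‖ := by positivity
  rw [Matrix.norm_le_iff hnn]
  intro i j
  rw [Matrix.mul_apply]
  calc ‖∑ k, X i k * Y k j‖ ≤ ∑ k, ‖X i k * Y k j‖ := norm_sum_le _ _
    _ ≤ ∑ _k : Fin d, ‖X‖ * ‖Y‖ := by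
        refine Finset.sum_le_sum fun k _ => ?_
        rw [norm_mul]
        exact mul_le_mul (Matrix.norm_entry_le_entrywise_sup_norm X)
          (Matrix.norm_entry_le_entrywise_sup_norm Y) (norm_nonneg _) (norm_nonneg _)
    _ = d * ‖X‖ * ‖Y‖ := by simp [mul_assoc]

private lemma scalar_deriv (K γ T Dv : ℝ) (hK : K ≠ 0) (t : ℝ)
    (hden : (1 + γ / (2*K) * (1 - Real.exp (2*K*(t-T))) * Dv) ≠ 0) :
    HasDerivAt
      (fun s => -Real.exp (2*K*(s-T)) / (1 + γ / (2*K) * (1 - Real.exp (2*K*(s-T))) * Dv))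
      (2*K * (-Real.exp (2*K*(t-T)) / (1 + γ / (2*K) * (1 - Real.exp (2*K*(t-T))) * Dv))
        - γ * Dv * (-Real.exp (2*K*(t-T)) / (1 + γ / (2*K) * (1 - Real.exp (2*K*(t-T))) * Dv))^2)
      t := by
  have hg : HasDerivAt (fun s => Real.exp (2*K*(s-T))) (Real.exp (2*K*(t-T)) * (2*K)) t := by
    have h1 : HasDerivAt (fun s : ℝ => 2*K*(s-T)) (2*K) t := by
      simpa using ((hasDerivAt_id t).sub_const T).const_mul (2*K)
    exact (Real.hasDerivAt_exp _).comp t h1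
  have hd : HasDerivAt (fun s => 1 + γ / (2*K) * (1 - Real.exp (2*K*(s-T))) * Dv)
      (γ / (2*K) * (-(Real.exp (2*K*(t-T)) * (2*K))) * Dv) t := by
    have h2 : HasDerivAt (fun s => γ / (2*K) * (1 - Real.exp (2*K*(s-T))) * Dv)
        (γ / (2*K) * (-(Real.exp (2*K*(t-T)) * (2*K))) * Dv) t := by
      have := (((hasDerivAt_const t (1:ℝ)).sub hg).const_mul (γ/(2*K))).mul_const Dv
      simpa using this
    simpa using h2.const_add 1
  have hdiv := hg.neg.div hd hden
  have h2K : (2*K) ≠ 0 := by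
    intro h; exact hK (by linarith [h])
  set E := Real.exp (2*K*(t-T)) with hE
  set h := 1 + γ / (2*K) * (1 - E) * Dv with hh
  refine hdiv.congr_deriv ?_
  show (-(E * (2 * K)) * h - (-E) * (γ / (2 * K) * -(E * (2 * K)) * Dv)) / h ^ 2 = _
  field_simp

private lemma hasDerivAt_conj_diagonal {d : ℕ} (L Lt : Matrix (Fin d) (Fin d) ℝ)
    (ψ : ℝ → Fin d → ℝ) (w : Fin d → ℝ) (t : ℝ)
    (h : ∀ i, HasDerivAt (fun s => ψ s i) (w i) t) :
    HasDerivAt (fun s => L * Matrix.diagonal (ψ s) * Lt) (L * Matrix.diagonal w * Lt) t := by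
  have hψ : HasDerivAt ψ w t := hasDerivAt_pi.mpr h
  let Φ : (Fin d → ℝ) →ₗ[ℝ] Matrix (Fin d) (Fin d) ℝ :=
    { toFun := fun v => L * Matrix.diagonal v * Lt
      map_add' := fun a b => by
        rw [show (a + b) = fun i => a i + b i from rfl, ← Matrix.diagonal_add,
          Matrix.mul_add, Matrix.add_mul]
      map_smul' := fun c a => by
        rw [RingHom.id_apply, Matrix.diagonal_smul, Matrix.mul_smul, Matrix.smul_mul] }
  have := (Φ.toContinuousLinearMap.hasFDerivAt (x := ψ t)).comp_hasDerivAt t hψ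
  exact this.congr_deriv rfl

private lemma conj_smul_add {d : ℕ} (L Lt : Matrix (Fin d) (Fin d) ℝ) (a b : ℝ)
    (x y : Fin d → ℝ) :
    a • (L * Matrix.diagonal x * Lt) + b • (L * Matrix.diagonal y * Lt)
      = L * Matrix.diagonal (fun i => a * x i + b * y i) * Lt := by
  have h : Matrix.diagonal (fun i => a * x i + b * y i)
      = a • Matrix.diagonal x + b • Matrix.diagonal y := by
    rw [← Matrix.diagonal_smul, ← Matrix.diagonal_smul, Matrix.diagonal_add]
    rfl
  rw [h, Matrix.mul_add, Matrix.add_mul, Matrix.mul_smul, Matrix.smul_mul,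
    Matrix.mul_smul, Matrix.smul_mul]



/-- the matrix Riccati ODE `Ȧ₁₁ = -γA₁₁ΣΣᵀA₁₁ + 2KA₁₁` with negative
semidefinite terminal condition `A₁₁(T) = A^F₁₁` has a unique global solution on `[0,T]`,
the solution is negative semidefinite everywhere, and consequently `V⁻¹ - γA₁₁(0)` is
positive definite for every positive definite covariance matrix `V`. -/
theorem stmt14 {d : ℕ} (T γ K : ℝ) (hT : 0 < T) (hγ : 0 < γ) (hK : 0 < K)
    (Sig : Matrix (Fin d) (Fin d) ℝ) (AF : Matrix (Fin d) (Fin d) ℝ)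
    (hAFsymm : AF.IsSymm) (hAF : (-AF).PosSemidef) :
    ∃ A : ℝ → Matrix (Fin d) (Fin d) ℝ,
      (∀ t ∈ Set.Icc (0:ℝ) T,
        HasDerivAt A ((-γ) • (A t * (Sig * Sigᵀ) * A t) + (2 * K) • A t) t) ∧
      A T = AF ∧
      (∀ B : ℝ → Matrix (Fin d) (Fin d) ℝ,
        (∀ t ∈ Set.Icc (0:ℝ) T,
          HasDerivAt B ((-γ) • (B t * (Sig * Sigᵀ) * B t) + (2 * K) • B t) t) →
        B T = AF → Set.EqOn A B (Set.Icc (0:ℝ) T)) ∧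
      (∀ t ∈ Set.Icc (0:ℝ) T, (-(A t)).PosSemidef) ∧
      (∀ V : Matrix (Fin d) (Fin d) ℝ, V.PosDef → (V⁻¹ - γ • A 0).PosDef) := by
  classical
  set S : Matrix (Fin d) (Fin d) ℝ := Sig * Sigᵀ with hSdef
  have hSps : S.PosSemidef := by
    have := Matrix.posSemidef_self_mul_conjTranspose Sig
    rwa [Matrix.conjTranspose_eq_transpose_of_trivial] at this
  set N : Matrix (Fin d) (Fin d) ℝ := -AF with hNdef
  have hN : N.PosSemidef := hAF
  set R : Matrix (Fin d) (Fin d) ℝ := (hN.1.eigenvectorUnitary : Matrix (Fin d) (Fin d) ℝ) *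
    Matrix.diagonal (fun i => Real.sqrt (hN.1.eigenvalues i)) *
    (hN.1.eigenvectorUnitary : Matrix (Fin d) (Fin d) ℝ)ᴴ with hRdef
  have hRps : R.PosSemidef :=
    (Matrix.posSemidef_diagonal_iff.mpr (fun i => Real.sqrt_nonneg _)).mul_mul_conjTranspose_same _
  have hRH : Rᴴ = R := hRps.isHermitian
  have hRR : R * R = N := by
    have hU' : (hN.1.eigenvectorUnitary : Matrix (Fin d) (Fin d) ℝ)ᴴ *
        (hN.1.eigenvectorUnitary : Matrix (Fin d) (Fin d) ℝ) = 1 := by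
      have := Matrix.mem_unitaryGroup_iff'.mp (hN.1.eigenvectorUnitary).2
      simpa [Matrix.star_eq_conjTranspose] using this
    have hspN : N = (hN.1.eigenvectorUnitary : Matrix (Fin d) (Fin d) ℝ) *
        Matrix.diagonal hN.1.eigenvalues *
        (hN.1.eigenvectorUnitary : Matrix (Fin d) (Fin d) ℝ)ᴴ := by
      have := hN.1.spectral_theorem
      simpa [Matrix.star_eq_conjTranspose, Function.comp] using this
    have hdd : Matrix.diagonal (fun i => Real.sqrt (hN.1.eigenvalues i)) *
        Matrix.diagonal (fun i => Real.sqrt (hN.1.eigenvalues i))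
        = Matrix.diagonal hN.1.eigenvalues := by
      rw [Matrix.diagonal_mul_diagonal]
      congr 1
      funext i
      exact Real.mul_self_sqrt (hN.eigenvalues_nonneg i)
    rw [hRdef]
    conv_rhs => rw [hspN]
    simp only [Matrix.mul_assoc]
    rw [← Matrix.mul_assoc _ _ (Matrix.diagonal _ * _), hU', Matrix.one_mul,
      ← Matrix.mul_assoc (Matrix.diagonal _), hdd]
  set M : Matrix (Fin d) (Fin d) ℝ := R * S * R with hMdef
  have hMps : M.PosSemidef := by
    have := hSps.mul_mul_conjTranspose_same R
    rwa [hRH] at this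
  have hMH : M.IsHermitian := hMps.1
  set U : Matrix (Fin d) (Fin d) ℝ := (hMH.eigenvectorUnitary : Matrix (Fin d) (Fin d) ℝ)
    with hUdef
  set D : Fin d → ℝ := hMH.eigenvalues with hDdef
  have hD : ∀ i, 0 ≤ D i := fun i => hMps.eigenvalues_nonneg i
  have hUU : U * Uᴴ = 1 := by
    have := Matrix.mem_unitaryGroup_iff.mp (hMH.eigenvectorUnitary).2
    simpa [Matrix.star_eq_conjTranspose] using this
  have hUU' : Uᴴ * U = 1 := by
    have := Matrix.mem_unitaryGroup_iff'.mp (hMH.eigenvectorUnitary).2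
    simpa [Matrix.star_eq_conjTranspose] using this
  have hspec : M = U * Matrix.diagonal D * Uᴴ := by
    have := hMH.spectral_theorem
    simpa [Matrix.star_eq_conjTranspose, Function.comp] using this
  set L : Matrix (Fin d) (Fin d) ℝ := R * U with hLdef
  have hLH : Lᴴ = Uᴴ * R := by rw [hLdef, Matrix.conjTranspose_mul, hRH]
  have hLSL : Lᴴ * S * L = Matrix.diagonal D := by
    rw [hLH, hLdef]
    have h1 : Uᴴ * R * S * (R * U) = Uᴴ * (R * S * R) * U := by
      simp only [Matrix.mul_assoc]
    rw [h1, ← hMdef, hspec]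
    have h2 : Uᴴ * (U * Matrix.diagonal D * Uᴴ) * U
        = (Uᴴ * U) * Matrix.diagonal D * (Uᴴ * U) := by simp only [Matrix.mul_assoc]
    rw [h2, hUU', Matrix.one_mul, Matrix.mul_one]
  have hLLH : L * Lᴴ = N := by
    rw [hLH, hLdef]
    have : R * U * (Uᴴ * R) = R * (U * Uᴴ) * R := by simp only [Matrix.mul_assoc]
    rw [this, hUU, Matrix.mul_one, hRR]
  -- scalar functions
  set φ : Fin d → ℝ → ℝ :=
    fun i s => -Real.exp (2*K*(s-T)) / (1 + γ / (2*K) * (1 - Real.exp (2*K*(s-T))) * D i)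
    with hφdef
  have hden_pos : ∀ i, ∀ s ≤ T, 0 < 1 + γ / (2*K) * (1 - Real.exp (2*K*(s-T))) * D i := by
    intro i s hs
    have hg1 : Real.exp (2*K*(s-T)) ≤ 1 := by
      rw [← Real.exp_zero]
      exact Real.exp_le_exp.mpr (by nlinarith)
    have hμ : 0 ≤ γ / (2*K) * (1 - Real.exp (2*K*(s-T))) := by
      apply mul_nonneg (by positivity) (by linarith)
    nlinarith [hD i, mul_nonneg hμ (hD i)]
  have hφneg : ∀ i, ∀ s ≤ T, φ i s < 0 := by
    intro i s hs
    rw [hφdef]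
    apply div_neg_of_neg_of_pos
    · simpa using Real.exp_pos (2*K*(s-T))
    · exact hden_pos i s hs
  set A : ℝ → Matrix (Fin d) (Fin d) ℝ :=
    fun s => L * Matrix.diagonal (fun i => φ i s) * Lᴴ with hAdef
  have hApsd : ∀ t ≤ T, (-(A t)).PosSemidef := by
    intro t ht
    have h1 : -(A t) = L * Matrix.diagonal (fun i => -(φ i t)) * Lᴴ := by
      rw [hAdef]
      rw [← Matrix.diagonal_neg, ← Matrix.neg_mul, ← Matrix.mul_neg]
    rw [h1]
    exact (Matrix.posSemidef_diagonal_iff.mpr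
      (fun i => by simpa using (hφneg i t ht).le)).mul_mul_conjTranspose_same L
  have hAderiv : ∀ t ∈ Set.Icc (0:ℝ) T,
      HasDerivAt A ((-γ) • (A t * S * A t) + (2 * K) • A t) t := by
    intro t ht
    have hder : HasDerivAt A
        (L * Matrix.diagonal (fun i => 2*K*(φ i t) - γ * D i * (φ i t)^2) * Lᴴ) t := by
      apply hasDerivAt_conj_diagonal
      intro i
      exact scalar_deriv K γ T (D i) hK.ne' t (hden_pos i t ht.2).ne'
    have key : A t * S * A t
        = L * Matrix.diagonal (fun i => φ i t * D i * φ i t) * Lᴴ := by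
      rw [hAdef]
      have h1 : L * Matrix.diagonal (fun i => φ i t) * Lᴴ * S
            * (L * Matrix.diagonal (fun i => φ i t) * Lᴴ)
          = L * (Matrix.diagonal (fun i => φ i t) * (Lᴴ * S * L)
            * Matrix.diagonal (fun i => φ i t)) * Lᴴ := by
        simp only [Matrix.mul_assoc]
      rw [h1, hLSL, Matrix.diagonal_mul_diagonal, Matrix.diagonal_mul_diagonal]
    have hcsa := conj_smul_add L Lᴴ (-γ) (2*K) (fun i => φ i t * D i * φ i t) (fun i => φ i t)
    have harg : (fun i => -γ * (φ i t * D i * φ i t) + 2*K * φ i t)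
        = fun i => 2*K*(φ i t) - γ * D i * (φ i t)^2 := by
      funext i; ring
    have h2 : (-γ) • (A t * S * A t) + (2 * K) • A t
        = L * Matrix.diagonal (fun i => 2*K*(φ i t) - γ * D i * (φ i t)^2) * Lᴴ := by
      rw [key, hAdef]
      rw [hcsa, harg]
    rw [h2]
    exact hder
  have hAT : A T = AF := by
    have hφT : (fun i => φ i T) = fun _ => (-1 : ℝ) := by
      funext i
      rw [hφdef]
      simp
    have hshow : A T = L * Matrix.diagonal (fun i => φ i T) * Lᴴ := rfl
    rw [hshow, hφT]
    have hdneg : Matrix.diagonal (fun _ : Fin d => (-1:ℝ)) = -(1 : Matrix (Fin d) (Fin d) ℝ) := by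
      rw [← Matrix.diagonal_one, Matrix.diagonal_neg]
    rw [hdneg, Matrix.mul_neg, Matrix.mul_one, Matrix.neg_mul, hLLH, hNdef, neg_neg]
  refine ⟨A, hAderiv, hAT, ?_, fun t ht => hApsd t ht.2, ?_⟩
  · -- uniqueness
    intro B hB hBT
    have hAc : ContinuousOn A (Set.Icc 0 T) :=
      fun s hs => ((hAderiv s hs).continuousAt).continuousWithinAt
    have hBc : ContinuousOn B (Set.Icc 0 T) :=
      fun s hs => ((hB s hs).continuousAt).continuousWithinAt
    obtain ⟨C1, hC1⟩ := (isCompact_Icc (a := (0:ℝ)) (b := T)).exists_bound_of_continuousOn hAc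
    obtain ⟨C2, hC2⟩ := (isCompact_Icc (a := (0:ℝ)) (b := T)).exists_bound_of_continuousOn hBc
    set ρ : ℝ := max (max C1 C2) 0 with hρdef
    have hρ0 : 0 ≤ ρ := le_max_right _ _
    set c : ℝ := γ * (d*d*‖S‖*ρ + d*d*‖S‖*ρ) + 2*K with hcdef
    have hc0 : 0 ≤ c := by positivity
    have hlip : ∀ s : ℝ, LipschitzOnWith (Real.toNNReal c)
        (fun X : Matrix (Fin d) (Fin d) ℝ => (-γ) • (X * S * X) + (2*K) • X)
        (Metric.closedBall (0 : Matrix (Fin d) (Fin d) ℝ) ρ) := by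
      intro s
      apply LipschitzOnWith.of_dist_le_mul
      intro X hX Y hY
      have hX' : ‖X‖ ≤ ρ := by
        simpa [dist_zero_right] using Metric.mem_closedBall.mp hX
      have hY' : ‖Y‖ ≤ ρ := by
        simpa [dist_zero_right] using Metric.mem_closedBall.mp hY
      rw [dist_eq_norm, dist_eq_norm]
      have hre : ((-γ) • (X * S * X) + (2*K) • X) - ((-γ) • (Y * S * Y) + (2*K) • Y)
          = (-γ) • ((X - Y) * S * X + Y * S * (X - Y)) + (2*K) • (X - Y) := by
        simp only [Matrix.sub_mul, Matrix.mul_sub, smul_sub, smul_add]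
        abel
      have step : ‖(-γ) • ((X - Y) * S * X + Y * S * (X - Y)) + (2*K) • (X - Y)‖
          ≤ γ * (‖(X - Y) * S * X‖ + ‖Y * S * (X - Y)‖) + (2*K)*‖X - Y‖ := by
        refine le_trans (norm_add_le _ _) ?_
        have e1 : ‖(-γ) • ((X - Y) * S * X + Y * S * (X - Y))‖
            ≤ γ * (‖(X - Y) * S * X‖ + ‖Y * S * (X - Y)‖) := by
          rw [norm_smul, Real.norm_eq_abs, abs_neg, abs_of_pos hγ]
          exact mul_le_mul_of_nonneg_left (norm_add_le _ _) hγ.le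
        have e2 : ‖(2*K) • (X - Y)‖ = (2*K) * ‖X - Y‖ := by
          rw [norm_smul, Real.norm_eq_abs, abs_of_pos (by positivity : (0:ℝ) < 2*K)]
        linarith
      have n1 : ‖(X - Y) * S * X‖ ≤ (d:ℝ)*d*‖S‖*ρ*‖X - Y‖ := by
        calc ‖(X - Y) * S * X‖ ≤ d * ‖(X - Y) * S‖ * ‖X‖ := matrix_norm_mul_le _ _
          _ ≤ (d:ℝ) * ((d * ‖X - Y‖ * ‖S‖) * ρ) := by
              rw [mul_assoc]
              refine mul_le_mul_of_nonneg_left ?_ (by positivity)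
              exact mul_le_mul (matrix_norm_mul_le _ _) hX' (norm_nonneg _) (by positivity)
          _ = (d:ℝ)*d*‖S‖*ρ*‖X - Y‖ := by ring
      have n2 : ‖Y * S * (X - Y)‖ ≤ (d:ℝ)*d*‖S‖*ρ*‖X - Y‖ := by
        calc ‖Y * S * (X - Y)‖ ≤ d * ‖Y * S‖ * ‖X - Y‖ := matrix_norm_mul_le _ _
          _ ≤ (d:ℝ) * (((d:ℝ) * ρ * ‖S‖) * ‖X - Y‖) := by
              rw [mul_assoc]
              refine mul_le_mul_of_nonneg_left ?_ (by positivity)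
              refine mul_le_mul ?_ le_rfl (norm_nonneg _) (by positivity)
              calc ‖Y * S‖ ≤ (d:ℝ) * ‖Y‖ * ‖S‖ := matrix_norm_mul_le _ _
                _ ≤ (d:ℝ) * ρ * ‖S‖ := by
                    refine mul_le_mul_of_nonneg_right ?_ (norm_nonneg _)
                    exact mul_le_mul_of_nonneg_left hY' (by positivity)
          _ = (d:ℝ)*d*‖S‖*ρ*‖X - Y‖ := by ring
      calc ‖((-γ) • (X * S * X) + (2*K) • X) - ((-γ) • (Y * S * Y) + (2*K) • Y)‖
          = ‖(-γ) • ((X - Y) * S * X + Y * S * (X - Y)) + (2*K) • (X - Y)‖ := by rw [hre]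
        _ ≤ γ * (‖(X - Y) * S * X‖ + ‖Y * S * (X - Y)‖) + (2*K)*‖X - Y‖ := step
        _ ≤ γ * ((d:ℝ)*d*‖S‖*ρ*‖X - Y‖ + (d:ℝ)*d*‖S‖*ρ*‖X - Y‖) + (2*K)*‖X - Y‖ := by
            have h12 := add_le_add n1 n2
            nlinarith [hγ.le]
        _ = c * ‖X - Y‖ := by rw [hcdef]; ring
        _ = (Real.toNNReal c : ℝ) * ‖X - Y‖ := by rw [Real.coe_toNNReal c hc0]
    have hρA : ∀ s ∈ Set.Ioc (0:ℝ) T, A s ∈ Metric.closedBall (0 : Matrix (Fin d) (Fin d) ℝ) ρ := by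
      intro s hs
      rw [Metric.mem_closedBall, dist_zero_right]
      exact le_trans (hC1 s ⟨hs.1.le, hs.2⟩) (le_trans (le_max_left _ _) (le_max_left _ _))
    have hρB : ∀ s ∈ Set.Ioc (0:ℝ) T, B s ∈ Metric.closedBall (0 : Matrix (Fin d) (Fin d) ℝ) ρ := by
      intro s hs
      rw [Metric.mem_closedBall, dist_zero_right]
      exact le_trans (hC2 s ⟨hs.1.le, hs.2⟩) (le_trans (le_max_right _ _) (le_max_left _ _))
    exact ODE_solution_unique_of_mem_Icc_left
      (v := fun _ X => (-γ) • (X * S * X) + (2*K) • X) (fun s _ => hlip s)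
      hAc (fun s hs => (hAderiv s ⟨hs.1.le, hs.2⟩).hasDerivWithinAt) hρA
      hBc (fun s hs => (hB s ⟨hs.1.le, hs.2⟩).hasDerivWithinAt) hρB
      (by rw [hAT, hBT])
  · -- positive definiteness
    intro V hV
    have hpsd : (γ • (-(A 0))).PosSemidef := by
      have hX := hApsd 0 hT.le
      refine ⟨?_, fun x => ?_⟩
      · have h1 := hX.1
        unfold Matrix.IsHermitian at *
        rw [Matrix.conjTranspose_smul, h1]
        simp
      · exact (hX.smul hγ.le).2 x
    have heq : V⁻¹ - γ • A 0 = V⁻¹ + γ • (-(A 0)) := by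
      rw [smul_neg, sub_eq_add_neg]
    rw [heq]
    exact hV.inv.add_posSemidef hpsd
end

section
/- Let $A_{00}$ satisfy $\dot A_{00}(t) = -\gamma A_{00}(t)\Sigma_0\Sigma_0^\top A_{00}(t) - \gamma A_{10}(t)^\top\Sigma\Sigma^\top A_{10}(t) + 2K_0 A_{00}(t)$ and define $\alpha_t := \Sigma_0^\top\dot A_{00}(t)A_{00}(t)^{-1}(\Sigma_0^\top)^{-1} - K_0 I$, $\varrho_t := -\gamma\Sigma_0^\top A_{00}(t)\Sigma_0 - \zeta_t$, where $\zeta$ satisfies $\dot\zeta_t = -\zeta_t^2 + \alpha_t\zeta_t + \zeta_t\alpha_t^\top - \eta_t\eta_t^\top - \gamma^2\Sigma_0^\top A_{10}(t)^\top\Sigma\Sigma^\top A_{10}(t)\Sigma_0$. Then $\varrho$ satisfies the Kalman filter Riccati equation $\dot\varrho_t = \eta_t\eta_t^\top + \alpha_t\varrho_t + \varrho_t\alpha_t^\top - \zeta_t\varrho_t - \varrho_t\zeta_t - \varrho_t^2$. -/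
open Matrix

attribute [local instance] Matrix.normedAddCommGroup Matrix.normedSpace

/-- with `α_t = Σ₀ᵀȦ₀₀(t)A₀₀(t)⁻¹(Σ₀ᵀ)⁻¹ - K₀I` and
`ϱ_t = -γΣ₀ᵀA₀₀(t)Σ₀ - ζ_t`, where `A₀₀` satisfies its Riccati ODE and `ζ` satisfies
`ζ̇ = -ζ² + αζ + ζαᵀ - ηηᵀ - γ²Σ₀ᵀA₁₀ᵀΣΣᵀA₁₀Σ₀`, the function `ϱ` satisfies the Kalman
filter Riccati equation `ϱ̇ = ηηᵀ + αϱ + ϱαᵀ - ζϱ - ϱζ - ϱ²`. -/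
theorem stmt16 {d₀ d k : ℕ} (γ K0 : ℝ) (hγ : 0 < γ) (hK0 : 0 < K0) (t : ℝ)
    (Sig0 : Matrix (Fin d₀) (Fin d₀) ℝ) (Sig : Matrix (Fin d) (Fin d) ℝ)
    (hSig0 : IsUnit Sig0)
    (A00 A00' : ℝ → Matrix (Fin d₀) (Fin d₀) ℝ) (A10 : ℝ → Matrix (Fin d) (Fin d₀) ℝ)
    (ze ze' : ℝ → Matrix (Fin d₀) (Fin d₀) ℝ) (eta : ℝ → Matrix (Fin d₀) (Fin k) ℝ)
    (hA00symm : ∀ s, (A00 s).IsSymm) (hA00inv : ∀ s, IsUnit (A00 s))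
    (hzesymm : ∀ s, (ze s).IsSymm)
    (hA00deriv : HasDerivAt A00 (A00' t) t)
    (hA00ode : ∀ s, A00' s
      = (-γ) • (A00 s * (Sig0 * Sig0ᵀ) * A00 s) - γ • ((A10 s)ᵀ * (Sig * Sigᵀ) * A10 s)
        + (2 * K0) • A00 s)
    (hzederiv : HasDerivAt ze (ze' t) t)
    (al : ℝ → Matrix (Fin d₀) (Fin d₀) ℝ)
    (hal : ∀ s, al s = Sig0ᵀ * A00' s * (A00 s)⁻¹ * (Sig0ᵀ)⁻¹ - K0 • 1)
    (hzeode : ze' t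
      = -(ze t * ze t) + al t * ze t + ze t * (al t)ᵀ - eta t * (eta t)ᵀ
        - (γ ^ 2) • (Sig0ᵀ * (A10 t)ᵀ * (Sig * Sigᵀ) * A10 t * Sig0))
    (rho : ℝ → Matrix (Fin d₀) (Fin d₀) ℝ)
    (hrho : ∀ s, rho s = (-γ) • (Sig0ᵀ * A00 s * Sig0) - ze s) :
    HasDerivAt rho
      (eta t * (eta t)ᵀ + al t * rho t + rho t * (al t)ᵀ
        - ze t * rho t - rho t * ze t - rho t * rho t) t := by

  have hrhofun : rho = fun s => (-γ) • (Sig0ᵀ * A00 s * Sig0) - ze s := funext hrho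
  have hD : HasDerivAt rho ((-γ) • (Sig0ᵀ * A00' t * Sig0) - ze' t) t := by
    rw [hrhofun]
    have h1 : HasDerivAt (fun s => (-γ) • (Sig0ᵀ * A00 s * Sig0))
        ((-γ) • (Sig0ᵀ * A00' t * Sig0)) t := by
      have h := (LinearMap.toContinuousLinearMap
        ({ toFun := fun X => (-γ) • (Sig0ᵀ * X * Sig0)
           map_add' := by intro X Y; simp [Matrix.mul_add, Matrix.add_mul, smul_add]
           map_smul' := by
             intro c X
             simp [Matrix.mul_smul, Matrix.smul_mul, smul_smul, mul_comm] } :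
          Matrix (Fin d₀) (Fin d₀) ℝ →ₗ[ℝ] Matrix (Fin d₀) (Fin d₀) ℝ)
        ).hasFDerivAt.comp_hasDerivAt t hA00deriv
      exact h
    exact h1.sub hzederiv
  convert hD using 1
  -- abbreviations
  set A := A00 t with hA
  set Z := ze t with hZ
  have hAsym : Aᵀ = A := hA00symm t
  have hZsym : Zᵀ = Z := hzesymm t
  have hAdet : IsUnit A.det := (Matrix.isUnit_iff_isUnit_det A).mp (hA00inv t)
  have hSdet : IsUnit Sig0.det := (Matrix.isUnit_iff_isUnit_det Sig0).mp hSig0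
  have hSTdet : IsUnit (Sig0ᵀ).det := by simpa using hSdet
  have hAAi : A * A⁻¹ = 1 := Matrix.mul_nonsing_inv A hAdet
  have hAiA : A⁻¹ * A = 1 := Matrix.nonsing_inv_mul A hAdet
  have hSSi : Sig0 * Sig0⁻¹ = 1 := Matrix.mul_nonsing_inv Sig0 hSdet
  have hSiS : Sig0⁻¹ * Sig0 = 1 := Matrix.nonsing_inv_mul Sig0 hSdet
  have hSTSTi : Sig0ᵀ * (Sig0ᵀ)⁻¹ = 1 := Matrix.mul_nonsing_inv _ hSTdet
  have hSTiST : (Sig0ᵀ)⁻¹ * Sig0ᵀ = 1 := Matrix.nonsing_inv_mul _ hSTdet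
  have hAAi' : ∀ X : Matrix (Fin d₀) (Fin d₀) ℝ, A * (A⁻¹ * X) = X := by
    intro X; rw [← mul_assoc, hAAi, one_mul]
  have hAiA' : ∀ X : Matrix (Fin d₀) (Fin d₀) ℝ, A⁻¹ * (A * X) = X := by
    intro X; rw [← mul_assoc, hAiA, one_mul]
  have hSSi' : ∀ X : Matrix (Fin d₀) (Fin d₀) ℝ, Sig0 * (Sig0⁻¹ * X) = X := by
    intro X; rw [← mul_assoc, hSSi, one_mul]
  have hSiS' : ∀ X : Matrix (Fin d₀) (Fin d₀) ℝ, Sig0⁻¹ * (Sig0 * X) = X := by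
    intro X; rw [← mul_assoc, hSiS, one_mul]
  have hSTSTi' : ∀ X : Matrix (Fin d₀) (Fin d₀) ℝ, Sig0ᵀ * ((Sig0ᵀ)⁻¹ * X) = X := by
    intro X; rw [← mul_assoc, hSTSTi, one_mul]
  have hSTiST' : ∀ X : Matrix (Fin d₀) (Fin d₀) ℝ, (Sig0ᵀ)⁻¹ * (Sig0ᵀ * X) = X := by
    intro X; rw [← mul_assoc, hSTiST, one_mul]
  rw [hrho t, hal t, hA00ode t, hzeode, hal t, hA00ode t]
  rw [← hA, ← hZ]
  simp only [Matrix.transpose_sub, Matrix.transpose_add, Matrix.transpose_smul, Matrix.transpose_neg,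
    Matrix.transpose_mul, Matrix.transpose_one, Matrix.transpose_transpose,
    Matrix.transpose_nonsing_inv, hAsym, hZsym,
    mul_add, add_mul, mul_sub, sub_mul, smul_mul_assoc, mul_smul_comm, smul_smul,
    Matrix.mul_assoc, Matrix.mul_add, Matrix.add_mul, Matrix.mul_sub, Matrix.sub_mul,
    Matrix.smul_mul, Matrix.mul_smul,
    mul_assoc, mul_one, one_mul, smul_sub, smul_add, neg_mul, mul_neg, neg_smul, smul_neg,
    hAAi, hAiA, hSSi, hSiS, hSTSTi, hSTiST,
    hAAi', hAiA', hSSi', hSiS', hSTSTi', hSTiST']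
  match_scalars <;> ring
end
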